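/- arXiv:1109.1023 — 4 statements merged into one kernel-verified Lean document; each statement's English description precedes it below -/
import Mathlib

section
/- Let H be a finitely generated free abelian group, and let ξ₁, ξ₂ ≤ H be primitive sublattices with ξ₁ ∩ ξ₂ = 0 and rank ξ₁ + rank ξ₂ = rank H. Set ξ = (H/ξ₁)^∨ + (H/ξ₂)^∨ ≤ H^∨. Then the determinant group ξ̄/ξ (primitive closure taken in H^∨) is isomorphic to the determinant group (ξ₁+ξ₂)‾/(ξ₁+ξ₂) (primitive closure taken in H). -/
/-- The primitive closure of a subgroup `ξ` of an additive abelian group: all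
elements having a positive multiple in `ξ`. -/
def addPrimitiveClosure {H : Type*} [AddCommGroup H] (ξ : AddSubgroup H) :
    AddSubgroup H where
  carrier := {x : H | ∃ n : ℕ, 0 < n ∧ n • x ∈ ξ}
  zero_mem' := ⟨1, one_pos, by simpa using ξ.zero_mem⟩
  add_mem' := by
    rintro a b ⟨n, hn, ha⟩ ⟨m, hm, hb⟩
    refine ⟨n * m, Nat.mul_pos hn hm, ?_⟩
    rw [smul_add]
    exact add_mem (by rw [mul_comm n m, mul_smul]; exact AddSubgroup.nsmul_mem _ ha m)
      (by rw [mul_smul]; exact AddSubgroup.nsmul_mem _ hb n)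
  neg_mem' := by
    rintro a ⟨n, hn, ha⟩
    exact ⟨n, hn, by rw [smul_neg]; exact neg_mem ha⟩

/-- The dual `(H/ξ)^∨`, viewed inside `H^∨ = Hom(H, ℤ)` via precomposition with
the projection `H → H/ξ`. -/
def dualOfQuotient {H : Type*} [AddCommGroup H] (ξ : AddSubgroup H) :
    AddSubgroup (H →+ ℤ) where
  carrier := Set.range (fun φ : (H ⧸ ξ) →+ ℤ => φ.comp (QuotientAddGroup.mk' ξ))
  zero_mem' := ⟨0, by ext x; simp⟩
  add_mem' := by
    rintro _ _ ⟨φ, rfl⟩ ⟨ψ, rfl⟩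
    exact ⟨φ + ψ, by ext x; simp⟩
  neg_mem' := by
    rintro _ ⟨φ, rfl⟩
    exact ⟨-φ, by ext x; simp⟩

open Module

section Basic

variable {H : Type*} [AddCommGroup H]

lemma mem_addPrimitiveClosure {ξ : AddSubgroup H} {x : H} :
    x ∈ addPrimitiveClosure ξ ↔ ∃ n : ℕ, 0 < n ∧ n • x ∈ ξ := Iff.rfl

lemma mem_dualOfQuotient {ξ : AddSubgroup H} {φ : H →+ ℤ} :
    φ ∈ dualOfQuotient ξ ↔ ∀ x ∈ ξ, φ x = 0 := by
  constructor
  · rintro ⟨ψ, rfl⟩ x hx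
    have : ((QuotientAddGroup.mk' ξ) x) = 0 := (QuotientAddGroup.eq_zero_iff x).mpr hx
    simp [AddMonoidHom.comp_apply, this]
  · intro h
    refine ⟨QuotientAddGroup.lift ξ φ h, ?_⟩
    ext x
    simp; rfl

def quotient_equiv_of_eq_top {G : Type*} [AddCommGroup G] (S T : AddSubgroup G)
    (hT : T = ⊤) : (↥T ⧸ S.addSubgroupOf T) ≃+ G ⧸ S := by
  subst hT
  refine QuotientAddGroup.congr _ _ AddSubgroup.topEquiv ?_
  ext x
  simp only [AddSubgroup.mem_map, AddSubgroup.mem_addSubgroupOf]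
  constructor
  · rintro ⟨y, hy, rfl⟩; exact hy
  · intro hx; exact ⟨⟨x, trivial⟩, hx, rfl⟩

end Basic



section Rank
variable {H : Type*} [AddCommGroup H] [Module.Free ℤ H] [Module.Finite ℤ H]

lemma finrank_addHom_int (N : Type*) [AddCommGroup N] [Module.Free ℤ N] [Module.Finite ℤ N] :
    finrank ℤ (N →+ ℤ) = finrank ℤ N := by
  classical
  rw [(addMonoidHomLequivInt (A := N) (B := ℤ) ℤ).finrank_eq]
  let b := Free.chooseBasis ℤ N
  rw [finrank_eq_card_basis b.dualBasis, finrank_eq_card_basis b]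

lemma finrank_sup_of_disjoint (p q : Submodule ℤ H) (h : p ⊓ q = ⊥) :
    finrank ℤ ↥(p ⊔ q) = finrank ℤ ↥p + finrank ℤ ↥q := by
  let f : (↥p × ↥q) →ₗ[ℤ] H := p.subtype.coprod q.subtype
  have hinj : Function.Injective f := by
    rw [← LinearMap.ker_eq_bot]
    ext ⟨x, y⟩
    simp only [LinearMap.mem_ker, Submodule.mem_bot, f, LinearMap.coprod_apply,
      Submodule.coe_subtype, Prod.mk_eq_zero]
    constructor
    · intro hxy
      have hx : (x : H) ∈ p ⊓ q := ⟨x.2, by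
        have : (x : H) = -(y : H) := by rw [eq_neg_iff_add_eq_zero]; exact hxy
        rw [this]; exact neg_mem y.2⟩
      rw [h] at hx
      have hx0 : (x : H) = 0 := hx
      have hy0 : (y : H) = 0 := by rw [hx0] at hxy; simpa using hxy
      exact ⟨Subtype.ext hx0, Subtype.ext hy0⟩
    · rintro ⟨rfl, rfl⟩; simp
  have hr : LinearMap.range f = p ⊔ q := by
    rw [LinearMap.range_coprod, Submodule.range_subtype, Submodule.range_subtype]
  have e : (↥p × ↥q) ≃ₗ[ℤ] ↥(p ⊔ q) :=
    (LinearEquiv.ofInjective f hinj).trans (LinearEquiv.ofEq _ _ hr)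
  rw [← e.finrank_eq, Module.finrank_prod]

end Rank

section T2
lemma mem_toIntSubmodule_iff {M : Type*} [AddCommGroup M] {S : AddSubgroup M} {x : M} :
    x ∈ AddSubgroup.toIntSubmodule S ↔ x ∈ S := Iff.rfl


variable {H : Type*} [AddCommGroup H] [Module.Free ℤ H] [Module.Finite ℤ H]

lemma addPrimitiveClosure_eq_top (S : AddSubgroup H)
    (hr : finrank ℤ ↥(AddSubgroup.toIntSubmodule S) = finrank ℤ H) :
    addPrimitiveClosure S = ⊤ := by
  classical
  rw [eq_top_iff]
  rintro x -
  obtain ⟨n, o, hno, bO, bN, a, ha⟩ :=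
    Submodule.exists_smith_normal_form_of_le (Free.chooseBasis ℤ H)
      (AddSubgroup.toIntSubmodule S) ⊤ le_top
  have hn : o = n := by
    have h1 : finrank ℤ ↥(AddSubgroup.toIntSubmodule S) = n := by
      simpa using finrank_eq_card_basis bN
    have h2 : finrank ℤ ↥(⊤ : Submodule ℤ H) = o := by
      simpa using finrank_eq_card_basis bO
    rw [finrank_top] at h2
    omega
  subst hn
  set c : Basis (Fin o) ℤ H := bO.map (Submodule.topEquiv) with hcdef
  have hc : ∀ i, c i = (bO i : H) := by
    intro i; simp [hcdef, Basis.map_apply]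
  have hmem : ∀ i, a i • c i ∈ S := by
    intro i
    have h := ha i
    have hcast : Fin.castLE hno i = i := Fin.ext rfl
    rw [hcast] at h
    have : (bN i : H) ∈ S := mem_toIntSubmodule_iff.mp (bN i).2
    rwa [h, ← hc i] at this
  have hane : ∀ i, a i ≠ 0 := by
    intro i hai
    have h := ha i
    rw [hai, zero_smul] at h
    exact bN.ne_zero i (Subtype.ext h)
  set A : ℤ := ∏ i, a i with hA
  have hAne : A ≠ 0 := Finset.prod_ne_zero_iff.mpr fun i _ => hane i
  have hAx : A • x ∈ S := by
    have hS : ∀ i, A • c i ∈ AddSubgroup.toIntSubmodule S := by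
      intro i
      have : A = (∏ j ∈ Finset.univ.erase i, a j) * a i := by
        rw [hA, ← Finset.prod_erase_mul _ _ (Finset.mem_univ i)]
      rw [this, mul_smul]
      exact Submodule.smul_mem _ _ (mem_toIntSubmodule_iff.mpr (hmem i))
    have hx : x = ∑ i, c.repr x i • c i := (Basis.sum_repr c x).symm
    have : A • x ∈ AddSubgroup.toIntSubmodule S := by
      rw [hx, Finset.smul_sum]
      refine Submodule.sum_mem _ fun i _ => ?_
      rw [smul_comm]
      exact Submodule.smul_mem _ _ (hS i)
    exact mem_toIntSubmodule_iff.mp this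
  refine ⟨A.natAbs, Int.natAbs_pos.mpr hAne, ?_⟩
  have hns : (A.natAbs : ℕ) • x = (A.natAbs : ℤ) • x := (natCast_zsmul x A.natAbs).symm
  rcases Int.natAbs_eq A with h | h
  · rw [hns, ← h]; exact hAx
  · rw [hns, show (A.natAbs : ℤ) = -A by omega, neg_smul]
    exact neg_mem hAx

end T2

section Q
variable {H : Type*} [AddCommGroup H] [Module.Free ℤ H] [Module.Finite ℤ H]

lemma quot_finite (ξ : AddSubgroup H) : Module.Finite ℤ (H ⧸ ξ) :=
  Module.Finite.of_surjective (QuotientAddGroup.mk' ξ).toIntLinearMap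
    (QuotientAddGroup.mk'_surjective ξ)

lemma quot_free (ξ : AddSubgroup H) (h : addPrimitiveClosure ξ = ξ) :
    Module.Free ℤ (H ⧸ ξ) := by
  have := quot_finite ξ
  have : NoZeroSMulDivisors ℤ (H ⧸ ξ) := by
    constructor
    intro k y hky
    by_contra hcon
    push_neg at hcon
    obtain ⟨hk, hy⟩ := hcon
    obtain ⟨x, rfl⟩ := QuotientAddGroup.mk'_surjective ξ y
    have hkx : k • x ∈ ξ := by
      have h0 : (QuotientAddGroup.mk' ξ) (k • x) = 0 := by rw [map_zsmul]; exact hky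
      exact (QuotientAddGroup.eq_zero_iff _).mp h0
    have hx : x ∈ addPrimitiveClosure ξ := by
      refine ⟨k.natAbs, Int.natAbs_pos.mpr hk, ?_⟩
      have hns : (k.natAbs : ℕ) • x = (k.natAbs : ℤ) • x := (natCast_zsmul x k.natAbs).symm
      rcases Int.natAbs_eq k with h' | h'
      · rw [hns, ← h']; exact hkx
      · rw [hns, show (k.natAbs : ℤ) = -k by omega, neg_smul]; exact neg_mem hkx
    rw [h] at hx
    exact hy ((QuotientAddGroup.eq_zero_iff x).mpr hx)
  exact Module.free_of_finite_type_torsion_free'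

lemma exists_section (ξ : AddSubgroup H) (h : addPrimitiveClosure ξ = ξ) :
    ∃ σ : (H ⧸ ξ) →ₗ[ℤ] H, ∀ y, (QuotientAddGroup.mk' ξ) (σ y) = y := by
  have := quot_free ξ h
  have := quot_finite ξ
  obtain ⟨σ, hσ⟩ := Module.projective_lifting_property
    (QuotientAddGroup.mk' ξ).toIntLinearMap LinearMap.id (QuotientAddGroup.mk'_surjective ξ)
  exact ⟨σ, fun y => congrArg (fun f => f y) hσ⟩

lemma finrank_quot_add (ξ : AddSubgroup H) (h : addPrimitiveClosure ξ = ξ) :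
    finrank ℤ ↥(AddSubgroup.toIntSubmodule ξ) + finrank ℤ (H ⧸ ξ) = finrank ℤ H := by
  have := quot_free ξ h
  have := quot_finite ξ
  obtain ⟨σ, hσ⟩ := exists_section ξ h
  set p := AddSubgroup.toIntSubmodule ξ with hp
  have hmemp : ∀ x : H, x - σ ((QuotientAddGroup.mk' ξ) x) ∈ p := by
    intro x
    show _ ∈ ξ
    have h0 : (QuotientAddGroup.mk' ξ) (x - σ ((QuotientAddGroup.mk' ξ) x)) = 0 := by
      rw [map_sub, hσ, sub_self]
    exact (QuotientAddGroup.eq_zero_iff _).mp h0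
  let e : H ≃ₗ[ℤ] ↥p × (H ⧸ ξ) :=
  { toFun := fun x => (⟨x - σ ((QuotientAddGroup.mk' ξ) x), hmemp x⟩, (QuotientAddGroup.mk' ξ) x)
    invFun := fun s => (s.1 : H) + σ s.2
    map_add' := by
      intro x y
      refine Prod.ext (Subtype.ext ?_) (by simp)
      show (x + y) - σ ((QuotientAddGroup.mk' ξ) (x + y)) =
        (x - σ ((QuotientAddGroup.mk' ξ) x)) + (y - σ ((QuotientAddGroup.mk' ξ) y))
      rw [map_add, map_add]
      abel
    map_smul' := by
      intro k x
      refine Prod.ext (Subtype.ext ?_) (by simp)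
      show (k • x) - σ ((QuotientAddGroup.mk' ξ) (k • x)) =
        k • (x - σ ((QuotientAddGroup.mk' ξ) x))
      rw [map_zsmul, map_smul, smul_sub]
    left_inv := by
      intro x
      show x - σ ((QuotientAddGroup.mk' ξ) x) + σ ((QuotientAddGroup.mk' ξ) x) = x
      abel
    right_inv := by
      rintro ⟨s, y⟩
      have hs0 : (QuotientAddGroup.mk' ξ) (s : H) = 0 := (QuotientAddGroup.eq_zero_iff _).mpr s.2
      refine Prod.ext (Subtype.ext ?_) ?_
      · show ((s : H) + σ y) - σ ((QuotientAddGroup.mk' ξ) ((s : H) + σ y)) = (s : H)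
        rw [map_add, hs0, hσ, zero_add]
        abel
      · show (QuotientAddGroup.mk' ξ) ((s : H) + σ y) = y
        rw [map_add, hs0, hσ, zero_add] }
  rw [e.finrank_eq, Module.finrank_prod]

end Q

section Main
open Module

lemma main_iso {H : Type*} [AddCommGroup H] [Module.Free ℤ H] [Module.Finite ℤ H]
    (ξ₁ ξ₂ : AddSubgroup H)
    (h1 : addPrimitiveClosure ξ₁ = ξ₁) (h2 : addPrimitiveClosure ξ₂ = ξ₂)
    (hdisj : ξ₁ ⊓ ξ₂ = ⊥)
    (hrank : finrank ℤ ↥(AddSubgroup.toIntSubmodule ξ₁) +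
        finrank ℤ ↥(AddSubgroup.toIntSubmodule ξ₂) = finrank ℤ H) :
    Nonempty (((H →+ ℤ) ⧸ (dualOfQuotient ξ₁ ⊔ dualOfQuotient ξ₂)) ≃+ (H ⧸ (ξ₁ ⊔ ξ₂))) := by
  classical
  have hKfree := quot_free ξ₂ h2
  have hKfin := quot_finite (H := H) ξ₂
  set π := QuotientAddGroup.mk' ξ₂ with hπdef
  set p₁ := AddSubgroup.toIntSubmodule ξ₁ with hp₁
  set πres : ↥p₁ →ₗ[ℤ] (H ⧸ ξ₂) := π.toIntLinearMap ∘ₗ p₁.subtype with hπres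
  have hπres_apply : ∀ x : ↥p₁, πres x = π (x : H) := fun x => rfl
  have hinj : Function.Injective πres := by
    rw [← LinearMap.ker_eq_bot]
    ext x
    simp only [LinearMap.mem_ker, Submodule.mem_bot]
    constructor
    · intro hx
      have hx2 : (x : H) ∈ ξ₂ := (QuotientAddGroup.eq_zero_iff _).mp hx
      have hx12 : (x : H) ∈ ξ₁ ⊓ ξ₂ := ⟨mem_toIntSubmodule_iff.mp x.2, hx2⟩
      rw [hdisj] at hx12
      exact Subtype.ext hx12
    · rintro rfl; simp
  set M : Submodule ℤ (H ⧸ ξ₂) := LinearMap.range πres with hM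
  set eM : ↥p₁ ≃ₗ[ℤ] ↥M := LinearEquiv.ofInjective πres hinj with heM
  have hr2 := finrank_quot_add ξ₂ h2
  have hrM : finrank ℤ ↥M = finrank ℤ (H ⧸ ξ₂) := by
    have := (LinearEquiv.finrank_eq eM).symm
    omega
  obtain ⟨n, o, hno, bO, bN, a, ha⟩ :=
    Submodule.exists_smith_normal_form_of_le (Free.chooseBasis ℤ (H ⧸ ξ₂)) M ⊤ le_top
  have hn : o = n := by
    have hbn : finrank ℤ ↥M = n := by simpa using finrank_eq_card_basis bN
    have hbo : finrank ℤ ↥(⊤ : Submodule ℤ (H ⧸ ξ₂)) = o := by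
      simpa using finrank_eq_card_basis bO
    rw [finrank_top] at hbo
    omega
  subst hn
  set c : Basis (Fin o) ℤ (H ⧸ ξ₂) := bO.map Submodule.topEquiv with hcdef
  have hc : ∀ i, (bN i : H ⧸ ξ₂) = a i • c i := by
    intro i
    have h := ha i
    have hcast : Fin.castLE hno i = i := Fin.ext rfl
    rw [hcast] at h
    rw [h]
    simp [hcdef, Basis.map_apply]
  choose mm hmm using fun i => LinearMap.mem_range.mp (bN i).2
  set m : Fin o → H := fun i => (mm i : H) with hmdef
  have hmξ₁ : ∀ i, m i ∈ ξ₁ := fun i => mem_toIntSubmodule_iff.mp (mm i).2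
  have hπm : ∀ i, π (m i) = a i • c i := by
    intro i
    rw [← hc i, ← hmm i]
    rfl
  set bξ : Basis (Fin o) ℤ ↥p₁ := bN.map eM.symm with hbξ
  have hbξ_eq : ∀ i, bξ i = mm i := by
    intro i
    rw [hbξ]
    simp only [Basis.map_apply]
    apply eM.injective
    rw [eM.apply_symm_apply]
    apply Subtype.ext
    rw [heM, LinearEquiv.ofInjective_apply]
    exact (hmm i).symm
  -- the two homomorphisms into the model group
  set Θ : (H →+ ℤ) →+ (∀ i : Fin o, ℤ ⧸ AddSubgroup.zmultiples (a i)) :=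
  { toFun := fun φ i => QuotientAddGroup.mk (φ (m i))
    map_zero' := by funext i; simp
    map_add' := by
      intro φ ψ
      funext i
      show QuotientAddGroup.mk ((φ + ψ) (m i)) = _
      simp [QuotientAddGroup.mk_add] } with hΘdef
  set Λ : (H ⧸ ξ₂) →+ (∀ i : Fin o, ℤ ⧸ AddSubgroup.zmultiples (a i)) :=
  { toFun := fun x i => QuotientAddGroup.mk (c.repr x i)
    map_zero' := by funext i; simp
    map_add' := by
      intro x y
      funext i
      show QuotientAddGroup.mk (c.repr (x + y) i) = _
      simp [QuotientAddGroup.mk_add] } with hΛdef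
  have hΛsurj : Function.Surjective Λ := by
    intro y
    choose t ht using fun i => QuotientAddGroup.mk_surjective (y i)
    refine ⟨∑ j, t j • c j, ?_⟩
    funext i
    show QuotientAddGroup.mk (c.repr (∑ j, t j • c j) i) = y i
    rw [c.repr_sum_self]
    exact ht i
  have hkerΛ : ∀ x : H ⧸ ξ₂, Λ x = 0 ↔ x ∈ M := by
    intro x
    constructor
    · intro hx
      have hdvd : ∀ i, a i ∣ c.repr x i := by
        intro i
        have hxi : QuotientAddGroup.mk (c.repr x i) =
            (0 : ℤ ⧸ AddSubgroup.zmultiples (a i)) := congrFun hx i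
        exact Int.mem_zmultiples_iff.mp ((QuotientAddGroup.eq_zero_iff _).mp hxi)
      choose t ht using hdvd
      have hxs : x = ∑ i, t i • ((a i) • c i) := by
        conv_lhs => rw [← Basis.sum_repr c x]
        refine Finset.sum_congr rfl fun i _ => ?_
        rw [smul_smul, mul_comm, ← ht i]
      rw [hxs]
      exact Submodule.sum_mem _ fun i _ =>
        Submodule.smul_mem _ _ (by rw [← hc i]; exact (bN i).2)
    · intro hx
      obtain ⟨u, rfl⟩ : ∃ u : ↥M, (u : H ⧸ ξ₂) = x := ⟨⟨x, hx⟩, rfl⟩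
      have hu : (u : H ⧸ ξ₂) = ∑ j, bN.repr u j • (a j • c j) := by
        conv_lhs => rw [← Basis.sum_repr bN u]
        rw [Submodule.coe_sum]
        refine Finset.sum_congr rfl fun j _ => ?_
        rw [SetLike.val_smul, hc j]
      funext i
      show QuotientAddGroup.mk (c.repr (u : H ⧸ ξ₂) i) = 0
      have hrepr : c.repr (u : H ⧸ ξ₂) i = bN.repr u i * a i := by
        rw [hu]
        have : ∀ j, bN.repr u j • (a j • c j) = (bN.repr u j * a j) • c j := by
          intro j; rw [smul_smul]
        simp_rw [this]
        rw [c.repr_sum_self]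
      rw [hrepr]
      exact (QuotientAddGroup.eq_zero_iff _).mpr
        (Int.mem_zmultiples_iff.mpr ⟨bN.repr u i, mul_comm _ _⟩)
  have hMset : ∀ y : H ⧸ ξ₂, y ∈ M ↔ y ∈ AddSubgroup.map π ξ₁ := by
    intro y
    rw [hM]
    constructor
    · rintro ⟨z, rfl⟩
      exact ⟨z, mem_toIntSubmodule_iff.mp z.2, rfl⟩
    · rintro ⟨z, hz, rfl⟩
      exact ⟨⟨z, mem_toIntSubmodule_iff.mpr hz⟩, rfl⟩
  have hπxM : ∀ x : H, π x ∈ M ↔ x ∈ ξ₁ ⊔ ξ₂ := by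
    intro x
    rw [hMset]
    have : (π x ∈ AddSubgroup.map π ξ₁) ↔ x ∈ AddSubgroup.comap π (AddSubgroup.map π ξ₁) :=
      Iff.rfl
    rw [this, AddSubgroup.comap_map_eq, hπdef, QuotientAddGroup.ker_mk']
  have hΦ : (Λ.comp π).ker = ξ₁ ⊔ ξ₂ := by
    ext x
    rw [AddMonoidHom.mem_ker, AddMonoidHom.comp_apply, hkerΛ, hπxM]
  have hΦsurj : Function.Surjective (Λ.comp π) := by
    intro y
    obtain ⟨x, hx⟩ := hΛsurj y
    obtain ⟨z, rfl⟩ := QuotientAddGroup.mk'_surjective ξ₂ x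
    exact ⟨z, hx⟩
  obtain ⟨σ₁, hσ₁⟩ := exists_section ξ₁ h1
  have hmemr : ∀ x : H, (((LinearMap.id : H →ₗ[ℤ] H) - σ₁ ∘ₗ (QuotientAddGroup.mk' ξ₁).toIntLinearMap) x) ∈ p₁ := by
    intro x
    show x - σ₁ ((QuotientAddGroup.mk' ξ₁) x) ∈ p₁
    apply mem_toIntSubmodule_iff.mpr
    have h0 : (QuotientAddGroup.mk' ξ₁) (x - σ₁ ((QuotientAddGroup.mk' ξ₁) x)) = 0 := by
      rw [map_sub, hσ₁, sub_self]
    exact (QuotientAddGroup.eq_zero_iff _).mp h0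
  set r : H →ₗ[ℤ] ↥p₁ :=
    LinearMap.codRestrict p₁ ((LinearMap.id : H →ₗ[ℤ] H) - σ₁ ∘ₗ (QuotientAddGroup.mk' ξ₁).toIntLinearMap)
      hmemr with hrdef
  have hrm : ∀ i, r (m i) = mm i := by
    intro i
    apply Subtype.ext
    show m i - σ₁ ((QuotientAddGroup.mk' ξ₁) (m i)) = (mm i : H)
    have h0 : (QuotientAddGroup.mk' ξ₁) (m i) = 0 :=
      (QuotientAddGroup.eq_zero_iff _).mpr (hmξ₁ i)
    rw [h0, map_zero, sub_zero]
  have hΘsurj : Function.Surjective Θ := by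
    intro y
    choose d hd using fun i => QuotientAddGroup.mk_surjective (y i)
    set f : ↥p₁ →ₗ[ℤ] ℤ := bξ.constr ℤ d with hfdef
    refine ⟨(f ∘ₗ r).toAddMonoidHom, ?_⟩
    funext i
    show QuotientAddGroup.mk ((f ∘ₗ r) (m i)) = y i
    rw [LinearMap.comp_apply, hrm i, ← hbξ_eq i, hfdef, Basis.constr_basis]
    exact hd i
  have hkerΘ : Θ.ker = dualOfQuotient ξ₁ ⊔ dualOfQuotient ξ₂ := by
    ext φ
    rw [AddMonoidHom.mem_ker]
    constructor
    · intro hφ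
      have hdvd : ∀ i, a i ∣ φ (m i) := by
        intro i
        have hxi : QuotientAddGroup.mk (φ (m i)) =
            (0 : ℤ ⧸ AddSubgroup.zmultiples (a i)) := congrFun hφ i
        exact Int.mem_zmultiples_iff.mp ((QuotientAddGroup.eq_zero_iff _).mp hxi)
      choose t ht using hdvd
      set ψ : (H ⧸ ξ₂) →ₗ[ℤ] ℤ := ∑ i, t i • c.coord i with hψdef
      have hψc : ∀ i, ψ (c i) = t i := by
        intro i
        rw [hψdef]
        rw [LinearMap.sum_apply]
        have : ∀ j, (t j • c.coord j) (c i) = if i = j then t j else 0 := by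
          intro j
          rw [LinearMap.smul_apply, Basis.coord_apply, Basis.repr_self,
            Finsupp.single_apply]
          by_cases hij : i = j <;> simp [hij]
        simp_rw [this]
        simp
      set φ' : H →+ ℤ := (ψ.toAddMonoidHom).comp π with hφ'def
      have hφ'mem : φ' ∈ dualOfQuotient ξ₂ := ⟨ψ.toAddMonoidHom, rfl⟩
      have hφ'm : ∀ i, φ' (m i) = φ (m i) := by
        intro i
        show ψ (π (m i)) = φ (m i)
        rw [hπm i, map_zsmul, hψc i, ht i, smul_eq_mul]
      have hχ : φ - φ' ∈ dualOfQuotient ξ₁ := by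
        rw [mem_dualOfQuotient]
        intro x hx
        obtain ⟨u, rfl⟩ : ∃ u : ↥p₁, (u : H) = x := ⟨⟨x, mem_toIntSubmodule_iff.mpr hx⟩, rfl⟩
        have hxsum : (u : H) = ∑ j, bξ.repr u j • m j := by
          conv_lhs => rw [← Basis.sum_repr bξ u]
          rw [Submodule.coe_sum]
          refine Finset.sum_congr rfl fun j _ => ?_
          rw [SetLike.val_smul, hbξ_eq j]
        rw [hxsum, map_sum]
        refine Finset.sum_eq_zero fun j _ => ?_
        rw [map_zsmul, AddMonoidHom.sub_apply, hφ'm j, sub_self, smul_zero]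
      have hsplit : φ = (φ - φ') + φ' := by abel
      rw [hsplit]
      exact AddSubgroup.add_mem _ (AddSubgroup.mem_sup_left hχ)
        (AddSubgroup.mem_sup_right hφ'mem)
    · intro hφ
      rw [AddSubgroup.mem_sup] at hφ
      obtain ⟨φ₁, hφ₁, φ₂, hφ₂, rfl⟩ := hφ
      funext i
      show QuotientAddGroup.mk ((φ₁ + φ₂) (m i)) = 0
      have e1 : φ₁ (m i) = 0 := mem_dualOfQuotient.mp hφ₁ _ (hmξ₁ i)
      obtain ⟨ψ₂, rfl⟩ := hφ₂
      have e2 : ψ₂.comp π (m i) = a i • ψ₂ (c i) := by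
        show ψ₂ (π (m i)) = _
        rw [hπm i, map_zsmul]
      rw [AddMonoidHom.add_apply, e1, zero_add, e2]
      exact (QuotientAddGroup.eq_zero_iff _).mpr
        (Int.mem_zmultiples_iff.mpr ⟨ψ₂ (c i), rfl⟩)
  let iso1 : (H ⧸ (ξ₁ ⊔ ξ₂)) ≃+ (∀ i : Fin o, ℤ ⧸ AddSubgroup.zmultiples (a i)) :=
    (QuotientAddGroup.quotientAddEquivOfEq hΦ.symm).trans
      (QuotientAddGroup.quotientKerEquivOfSurjective _ hΦsurj)
  let iso2 : ((H →+ ℤ) ⧸ (dualOfQuotient ξ₁ ⊔ dualOfQuotient ξ₂)) ≃+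
      (∀ i : Fin o, ℤ ⧸ AddSubgroup.zmultiples (a i)) :=
    (QuotientAddGroup.quotientAddEquivOfEq hkerΘ.symm).trans
      (QuotientAddGroup.quotientKerEquivOfSurjective _ hΘsurj)
  exact ⟨iso2.trans iso1.symm⟩

end Main

section Final
open Module
variable {H : Type*} [AddCommGroup H] [Module.Free ℤ H] [Module.Finite ℤ H]

lemma finrank_dualOfQuotient (ξ : AddSubgroup H) :
    finrank ℤ ↥(AddSubgroup.toIntSubmodule (dualOfQuotient ξ)) =
      finrank ℤ ((H ⧸ ξ) →+ ℤ) := by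
  classical
  set Lc : ((H ⧸ ξ) →+ ℤ) →ₗ[ℤ] (H →+ ℤ) :=
  { toFun := fun ψ => ψ.comp (QuotientAddGroup.mk' ξ)
    map_add' := by intro ψ χ; ext x; simp
    map_smul' := by intro k ψ; ext x; simp } with hLc
  have hinj : Function.Injective Lc := by
    intro ψ χ h
    ext y
    exact congrArg (fun f : H →+ ℤ => f y) h
  have hr : LinearMap.range Lc = AddSubgroup.toIntSubmodule (dualOfQuotient ξ) := by
    ext φ
    constructor
    · rintro ⟨ψ, rfl⟩; exact ⟨ψ, rfl⟩
    · rintro ⟨ψ, rfl⟩; exact ⟨ψ, rfl⟩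
  exact ((LinearEquiv.ofInjective Lc hinj).trans (LinearEquiv.ofEq _ _ hr)).finrank_eq.symm

lemma toIntSubmodule_sup (S T : AddSubgroup H) :
    AddSubgroup.toIntSubmodule (S ⊔ T) =
      AddSubgroup.toIntSubmodule S ⊔ AddSubgroup.toIntSubmodule T := by
  ext x
  rw [mem_toIntSubmodule_iff, AddSubgroup.mem_sup, Submodule.mem_sup]
  constructor
  · rintro ⟨y, hy, z, hz, rfl⟩; exact ⟨y, hy, z, hz, rfl⟩
  · rintro ⟨y, hy, z, hz, rfl⟩; exact ⟨y, hy, z, hz, rfl⟩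

lemma toIntSubmodule_disjoint {S T : AddSubgroup H} (h : S ⊓ T = ⊥) :
    AddSubgroup.toIntSubmodule S ⊓ AddSubgroup.toIntSubmodule T = ⊥ := by
  ext x
  rw [Submodule.mem_inf, Submodule.mem_bot]
  constructor
  · rintro ⟨hx1, hx2⟩
    have : x ∈ S ⊓ T := ⟨hx1, hx2⟩
    rw [h] at this
    exact this
  · rintro rfl
    exact ⟨Submodule.zero_mem _, Submodule.zero_mem _⟩

theorem determinant_group_iso' (ξ₁ ξ₂ : AddSubgroup H)
    (h1 : addPrimitiveClosure ξ₁ = ξ₁) (h2 : addPrimitiveClosure ξ₂ = ξ₂)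
    (hdisj : ξ₁ ⊓ ξ₂ = ⊥)
    (hrank : Module.finrank ℤ ↥(AddSubgroup.toIntSubmodule ξ₁) +
        Module.finrank ℤ ↥(AddSubgroup.toIntSubmodule ξ₂) = Module.finrank ℤ H) :
    Nonempty
      ((↥(addPrimitiveClosure (dualOfQuotient ξ₁ ⊔ dualOfQuotient ξ₂)) ⧸
          (dualOfQuotient ξ₁ ⊔ dualOfQuotient ξ₂).addSubgroupOf
            (addPrimitiveClosure (dualOfQuotient ξ₁ ⊔ dualOfQuotient ξ₂))) ≃+
        (↥(addPrimitiveClosure (ξ₁ ⊔ ξ₂)) ⧸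
          (ξ₁ ⊔ ξ₂).addSubgroupOf (addPrimitiveClosure (ξ₁ ⊔ ξ₂)))) := by
  classical
  haveI hfree : Module.Free ℤ (H →+ ℤ) := Module.Free.of_equiv (addMonoidHomLequivInt ℤ).symm
  haveI hfin : Module.Finite ℤ (H →+ ℤ) := Module.Finite.equiv (addMonoidHomLequivInt ℤ).symm
  haveI := quot_free ξ₁ h1
  haveI := quot_finite (H := H) ξ₁
  haveI := quot_free ξ₂ h2
  haveI := quot_finite (H := H) ξ₂
  have hq1 := finrank_quot_add ξ₁ h1
  have hq2 := finrank_quot_add ξ₂ h2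
  have hsup1 : addPrimitiveClosure (ξ₁ ⊔ ξ₂) = ⊤ := by
    apply addPrimitiveClosure_eq_top
    rw [toIntSubmodule_sup, finrank_sup_of_disjoint _ _ (toIntSubmodule_disjoint hdisj)]
    exact hrank
  have hAdisj : dualOfQuotient ξ₁ ⊓ dualOfQuotient ξ₂ = ⊥ := by
    rw [eq_bot_iff]
    rintro φ ⟨hφ1, hφ2⟩
    have hzero : ∀ x : H, φ x = 0 := by
      intro x
      have hx : x ∈ addPrimitiveClosure (ξ₁ ⊔ ξ₂) := by rw [hsup1]; trivial
      obtain ⟨k, hk, hkx⟩ := hx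
      rw [AddSubgroup.mem_sup] at hkx
      obtain ⟨y, hy, z, hz, hyz⟩ := hkx
      have h0 : φ (k • x) = 0 := by
        rw [← hyz, map_add, mem_dualOfQuotient.mp hφ1 y hy,
          mem_dualOfQuotient.mp hφ2 z hz, add_zero]
      rw [map_nsmul] at h0
      have h0' : (k : ℤ) * φ x = 0 := by rw [← nsmul_eq_mul]; exact_mod_cast h0
      rcases mul_eq_zero.mp h0' with hk0 | hφ0
      · exfalso
        have hk00 : k = 0 := by exact_mod_cast hk0
        omega
      · exact hφ0
    exact AddSubgroup.mem_bot.mpr (AddMonoidHom.ext hzero)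
  have hsup2 : addPrimitiveClosure (dualOfQuotient ξ₁ ⊔ dualOfQuotient ξ₂) = ⊤ := by
    apply addPrimitiveClosure_eq_top
    rw [toIntSubmodule_sup, finrank_sup_of_disjoint _ _ (toIntSubmodule_disjoint hAdisj)]
    rw [finrank_dualOfQuotient, finrank_dualOfQuotient, finrank_addHom_int,
      finrank_addHom_int, finrank_addHom_int]
    omega
  obtain ⟨e0⟩ := main_iso ξ₁ ξ₂ h1 h2 hdisj hrank
  exact ⟨(quotient_equiv_of_eq_top _ _ hsup2).trans
    (e0.trans (quotient_equiv_of_eq_top _ _ hsup1).symm)⟩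

end Final


/-- For primitive sublattices `ξ₁, ξ₂` of a f.g. free abelian group `H` with
`ξ₁ ∩ ξ₂ = 0` and complementary ranks, the determinant group of
`ξ = (H/ξ₁)^∨ + (H/ξ₂)^∨ ≤ H^∨` is isomorphic to the determinant group of
`ξ₁ + ξ₂ ≤ H`. -/
theorem determinant_group_iso {H : Type*} [AddCommGroup H]
    [Module.Free ℤ H] [Module.Finite ℤ H]
    (ξ₁ ξ₂ : AddSubgroup H)
    (h1 : addPrimitiveClosure ξ₁ = ξ₁) (h2 : addPrimitiveClosure ξ₂ = ξ₂)
    (hdisj : ξ₁ ⊓ ξ₂ = ⊥)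
    (hrank : Module.finrank ℤ ↥(AddSubgroup.toIntSubmodule ξ₁) +
        Module.finrank ℤ ↥(AddSubgroup.toIntSubmodule ξ₂) = Module.finrank ℤ H) :
    Nonempty
      ((↥(addPrimitiveClosure (dualOfQuotient ξ₁ ⊔ dualOfQuotient ξ₂)) ⧸
          (dualOfQuotient ξ₁ ⊔ dualOfQuotient ξ₂).addSubgroupOf
            (addPrimitiveClosure (dualOfQuotient ξ₁ ⊔ dualOfQuotient ξ₂))) ≃+
        (↥(addPrimitiveClosure (ξ₁ ⊔ ξ₂)) ⧸
          (ξ₁ ⊔ ξ₂).addSubgroupOf (addPrimitiveClosure (ξ₁ ⊔ ξ₂)))) := by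
  exact determinant_group_iso' ξ₁ ξ₂ h1 h2 hdisj hrank
end

section
/- Let ξ be a subgroup of a finitely generated abelian group H with primitive closure ξ̄, and suppose η ∈ Hom(H, ℂ*) has finite order and the coset ηV(ξ) is considered. If ρ ∈ Hom(H, ℂ*) satisfies ρV(ξ) = ηV(ξ), and the image of ρ in Hom(H,ℂ*)/V(ξ) has order n, then ρ can be chosen so that ρ has finite order m with n ∣ m and m ∣ n·c, where c is the exponent of the finite group ξ̄/ξ. -/
/-- The primitive closure of a subgroup `ξ` of an abelian group. -/
def primitiveClosure {H : Type*} [CommGroup H] (ξ : Subgroup H) : Subgroup H where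
  carrier := {x : H | ∃ n : ℕ, 0 < n ∧ x ^ n ∈ ξ}
  one_mem' := ⟨1, one_pos, by simpa using ξ.one_mem⟩
  mul_mem' := by
    rintro a b ⟨n, hn, ha⟩ ⟨m, hm, hb⟩
    refine ⟨n * m, Nat.mul_pos hn hm, ?_⟩
    rw [mul_pow]
    exact mul_mem (by rw [pow_mul]; exact pow_mem ha m)
      (by rw [mul_comm n m, pow_mul]; exact pow_mem hb n)
  inv_mem' := by
    rintro a ⟨n, hn, ha⟩
    exact ⟨n, hn, by rw [inv_pow]; exact inv_mem ha⟩

/-- `V(ξ)`: the subgroup of characters of `H` vanishing on `ξ`. -/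
def charsVanishing {H : Type*} [CommGroup H] (ξ : Subgroup H) :
    Subgroup (H →* ℂˣ) where
  carrier := {ρ : H →* ℂˣ | ∀ x ∈ ξ, ρ x = 1}
  one_mem' := fun x _ => rfl
  mul_mem' := by
    intro ρ σ hρ hσ x hx
    simp [hρ x hx, hσ x hx]
  inv_mem' := by
    intro ρ hρ x hx
    simp [hρ x hx]

section Aux

variable {H : Type*} [CommGroup H]

theorem ξ_le_primitiveClosure (ξ : Subgroup H) : ξ ≤ primitiveClosure ξ :=
  fun x hx => ⟨1, one_pos, by simpa using hx⟩

end Aux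

/-- If `η` is a finite-order character, then its coset modulo `V(ξ)` contains a
finite-order representative `ρ` whose order `m` satisfies `n ∣ m` and
`m ∣ n·c`, where `n` is the order of the coset and `c` the exponent of the
determinant group `ξ̄/ξ`. -/
theorem finite_order_coset_representative {H : Type*} [CommGroup H]
    (hfg : Group.FG H) (ξ : Subgroup H) (η : H →* ℂˣ) (hη : IsOfFinOrder η) :
    ∃ ρ : H →* ℂˣ,
      (QuotientGroup.mk ρ : (H →* ℂˣ) ⧸ charsVanishing ξ) = QuotientGroup.mk η ∧
      IsOfFinOrder ρ ∧
      orderOf (QuotientGroup.mk η : (H →* ℂˣ) ⧸ charsVanishing ξ) ∣ orderOf ρ ∧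
      orderOf ρ ∣ orderOf (QuotientGroup.mk η : (H →* ℂˣ) ⧸ charsVanishing ξ) *
        Monoid.exponent (↥(primitiveClosure ξ) ⧸ ξ.subgroupOf (primitiveClosure ξ)) := by

  classical
  haveI : (charsVanishing ξ).Normal := ⟨fun n hn g => by simpa [mul_comm] using hn⟩
  set n := orderOf (QuotientGroup.mk η : (H →* ℂˣ) ⧸ charsVanishing ξ) with hn
  set c := Monoid.exponent (↥(primitiveClosure ξ) ⧸ ξ.subgroupOf (primitiveClosure ξ)) with hc
  have hmkfin : IsOfFinOrder (QuotientGroup.mk η : (H →* ℂˣ) ⧸ charsVanishing ξ) :=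
    (QuotientGroup.mk' (charsVanishing ξ)).isOfFinOrder hη
  have hnpos : 0 < n := hmkfin.orderOf_pos
  rcases Nat.eq_zero_or_pos c with hc0 | hcpos
  · refine ⟨η, rfl, hη, ?_, ?_⟩
    · exact orderOf_map_dvd (QuotientGroup.mk' (charsVanishing ξ)) η
    · rw [hc0, mul_zero]; exact dvd_zero _
  -- main case
  have hkpos : 0 < n * c := Nat.mul_pos hnpos hcpos
  -- η ^ n vanishes on ξ
  have hηn : η ^ n ∈ charsVanishing ξ := by
    have h1 : (QuotientGroup.mk (η ^ n) : (H →* ℂˣ) ⧸ charsVanishing ξ) = 1 := by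
      rw [QuotientGroup.mk_pow]
      exact pow_orderOf_eq_one _
    exact (QuotientGroup.eq_one_iff _).1 h1
  -- powers fall into ξ
  have hpowc : ∀ x ∈ primitiveClosure ξ, x ^ c ∈ ξ := by
    intro x hx
    have h1 : (QuotientGroup.mk (⟨x, hx⟩ : primitiveClosure ξ) :
        ↥(primitiveClosure ξ) ⧸ ξ.subgroupOf (primitiveClosure ξ)) ^ c = 1 :=
      Monoid.pow_exponent_eq_one _
    rw [← QuotientGroup.mk_pow, QuotientGroup.eq_one_iff, Subgroup.mem_subgroupOf] at h1
    simpa using h1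
  set χ : H →* ℂˣ := η ^ (n * c) with hχdef
  have hχ : ∀ x ∈ primitiveClosure ξ, χ x = 1 := by
    intro x hx
    have h1 := hηn (x ^ c) (hpowc x hx)
    have : χ x = (η ^ n) (x ^ c) := by
      simp [hχdef, ← pow_mul, mul_comm n c]
    rw [this, h1]
  -- additive / module setup
  haveI : AddGroup.FG (Additive H) := GroupFG.iff_add_fg.1 hfg
  haveI : Module.Finite ℤ (Additive H) := Module.Finite.iff_addGroup_fg.2 ‹_›
  set N : Submodule ℤ (Additive H) :=
    AddSubgroup.toIntSubmodule (Subgroup.toAddSubgroup (primitiveClosure ξ)) with hN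
  have hmemN : ∀ a : Additive H, a ∈ N ↔ a.toMul ∈ primitiveClosure ξ := fun a => Iff.rfl
  haveI : NoZeroSMulDivisors ℤ (Additive H ⧸ N) := by
    refine ⟨fun {m x} h => ?_⟩
    by_cases hm : m = 0
    · exact Or.inl hm
    refine Or.inr ?_
    obtain ⟨a, rfl⟩ := Submodule.Quotient.mk_surjective N x
    rw [← Submodule.Quotient.mk_smul, Submodule.Quotient.mk_eq_zero] at h
    rw [Submodule.Quotient.mk_eq_zero]
    rw [hmemN] at h
    obtain ⟨p, hp, hap⟩ := h
    rw [hmemN]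
    refine ⟨(m * p).natAbs, ?_, ?_⟩
    · simpa [Int.natAbs_mul, Nat.pos_iff_ne_zero] using And.intro hm hp.ne'
    · have h2 : a.toMul ^ (m * (p : ℤ)) ∈ ξ := by
        rw [zpow_mul, zpow_natCast]
        have : (Additive.toMul (m • a)) = a.toMul ^ m := rfl
        rwa [this] at hap
      rcases Int.natAbs_eq (m * p) with he | he
      · rw [← zpow_natCast]; rw [he] at h2; simpa using h2
      · rw [← zpow_natCast]
        have h3 : ((m * (p : ℤ)).natAbs : ℤ) = -(m * p) := by omega
        rw [h3, zpow_neg]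
        exact inv_mem h2
  haveI : Module.Free ℤ (Additive H ⧸ N) := Module.free_of_finite_type_torsion_free'
  set b := Module.Free.chooseBasis ℤ (Additive H ⧸ N) with hb
  set χ' : Additive H →ₗ[ℤ] Additive ℂˣ := (MonoidHom.toAdditive χ).toIntLinearMap with hχ'
  have hker : N ≤ LinearMap.ker χ' := by
    intro a ha
    rw [LinearMap.mem_ker]
    have : χ a.toMul = 1 := hχ _ ((hmemN a).1 ha)
    simpa [hχ'] using congrArg Additive.ofMul this
  set χbar : (Additive H ⧸ N) →ₗ[ℤ] Additive ℂˣ := N.liftQ χ' hker with hχbar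
  -- roots
  have hw : ∀ i, ∃ w : ℂˣ, w ^ (n * c) = Additive.toMul (χbar (b i)) := by
    intro i
    obtain ⟨z, hz⟩ := IsAlgClosed.exists_pow_nat_eq
      ((Additive.toMul (χbar (b i)) : ℂˣ) : ℂ) hkpos
    have hz0 : z ≠ 0 := by
      intro h0
      rw [h0, zero_pow hkpos.ne'] at hz
      exact (Units.ne_zero _) hz.symm
    exact ⟨Units.mk0 z hz0, Units.ext (by simpa using hz)⟩
  choose w hwpow using hw
  set σ' : (Additive H ⧸ N) →ₗ[ℤ] Additive ℂˣ :=
    b.constr ℤ (fun i => Additive.ofMul (w i)) with hσ'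
  have hkey : ((n * c : ℕ) : ℤ) • σ' = χbar := by
    refine b.ext fun i => ?_
    rw [LinearMap.smul_apply, hσ', Module.Basis.constr_basis]
    rw [← ofMul_zpow, zpow_natCast, hwpow i]
    simp
  set σ : H →* ℂˣ := MonoidHom.toAdditive.symm ((σ'.comp N.mkQ).toAddMonoidHom) with hσ
  have hσapp : ∀ x : H, σ x = Additive.toMul (σ' (N.mkQ (Additive.ofMul x))) := fun x => rfl
  have hσvan : ∀ x ∈ primitiveClosure ξ, σ x = 1 := by
    intro x hx
    rw [hσapp]
    have : N.mkQ (Additive.ofMul x) = 0 := by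
      rw [Submodule.mkQ_apply, Submodule.Quotient.mk_eq_zero]
      exact (hmemN _).2 (by simpa using hx)
    rw [this, map_zero]
    rfl
  have hσmem : σ ∈ charsVanishing ξ := fun x hx => hσvan x (ξ_le_primitiveClosure ξ hx)
  have hσk : σ ^ (n * c) = χ := by
    refine MonoidHom.ext fun x => ?_
    have h1 : (σ ^ (n * c)) x = σ x ^ (n * c) := rfl
    rw [h1, hσapp]
    have h2 : (Additive.toMul (σ' (N.mkQ (Additive.ofMul x)))) ^ (n * c) =
        Additive.toMul (((n * c : ℕ) : ℤ) • σ' (N.mkQ (Additive.ofMul x))) := by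
      rw [← zpow_natCast]
      rfl
    have h4 := congrFun (congrArg DFunLike.coe hkey) (N.mkQ (Additive.ofMul x))
    rw [LinearMap.smul_apply] at h4
    rw [h2, h4]
    have h3 : χbar (N.mkQ (Additive.ofMul x)) = χ' (Additive.ofMul x) := by
      rw [Submodule.mkQ_apply, hχbar, Submodule.liftQ_apply]
    rw [h3]
    rfl
  refine ⟨η * σ⁻¹, ?_, ?_, ?_, ?_⟩
  · rw [QuotientGroup.eq]
    have : (η * σ⁻¹)⁻¹ * η = σ := by ext x; simp
    rw [this]
    exact hσmem
  · refine isOfFinOrder_iff_pow_eq_one.2 ⟨n * c, hkpos, ?_⟩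
    have hsplit : (η * σ⁻¹) ^ (n * c) = η ^ (n * c) * (σ ^ (n * c))⁻¹ := by
      ext x; simp [mul_pow]
    rw [hsplit, hσk, ← hχdef]
    exact mul_inv_cancel χ
  · have he : (QuotientGroup.mk (η * σ⁻¹) : (H →* ℂˣ) ⧸ charsVanishing ξ) =
        QuotientGroup.mk η := by
      rw [QuotientGroup.eq]
      have : (η * σ⁻¹)⁻¹ * η = σ := by ext x; simp
      rw [this]; exact hσmem
    rw [hn, ← he]
    exact orderOf_map_dvd (QuotientGroup.mk' (charsVanishing ξ)) _
  · refine orderOf_dvd_of_pow_eq_one ?_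
    have hsplit : (η * σ⁻¹) ^ (n * c) = η ^ (n * c) * (σ ^ (n * c))⁻¹ := by
      ext x; simp [mul_pow]
    rw [hsplit, hσk, ← hχdef]
    exact mul_inv_cancel χ
end

section
/- Let χ₁, χ₂ be primitive sublattices of ℤ^r with χ₁ ∩ χ₂ = 0 and χ₁ ⊕ χ₂ of full rank r. Then the intersection exp(χ₁ ⊗ ℂ) ∩ exp(χ₂ ⊗ ℂ) in (ℂ*)^r is a finite group isomorphic to (χ₁+χ₂)‾/(χ₁+χ₂), the quotient of the primitive closure of χ₁+χ₂ in ℤ^r by χ₁+χ₂. -/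
/-- A sublattice `χ ≤ L` is primitive if `L/χ` is torsion-free, i.e. `χ` is
saturated. -/
def IsPrimitiveLattice {H : Type*} [AddCommGroup H] (χ : AddSubgroup H) : Prop :=
  ∀ (x : H) (n : ℕ), 0 < n → n • x ∈ χ → x ∈ χ

/-- The coordinate-wise exponential map `ℂ^r → (ℂ*)^r`. -/
noncomputable def expMap {r : ℕ} (z : Fin r → ℂ) : Fin r → ℂˣ :=
  fun i => Units.mk0 (Complex.exp (2 * Real.pi * Complex.I * z i)) (Complex.exp_ne_zero _)

/-- The complex span `χ ⊗ ℂ ⊆ ℂ^r` of a sublattice `χ ≤ ℤ^r`. -/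
def complexSpan {r : ℕ} (χ : AddSubgroup (Fin r → ℤ)) : Set (Fin r → ℂ) :=
  ↑(Submodule.span ℂ ((fun (v : Fin r → ℤ) (i : Fin r) => (v i : ℂ)) '' (χ : Set (Fin r → ℤ))))


namespace ExpAux

variable {r : ℕ}

def castFn (v : Fin r → ℤ) : Fin r → ℂ := fun i => (v i : ℂ)

lemma castFn_injective : Function.Injective (castFn (r := r)) := by
  intro a b h
  funext i
  have : ((a i : ℂ)) = (b i : ℂ) := congrFun h i
  exact_mod_cast this

def castHom : (Fin r → ℤ) →+ (Fin r → ℂ) where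
  toFun := castFn
  map_zero' := by funext i; simp [castFn]
  map_add' := fun a b => by funext i; simp [castFn]

lemma castFn_add (a b : Fin r → ℤ) : castFn (a + b) = castFn a + castFn b :=
  castHom.map_add a b

lemma castFn_zero : castFn (0 : Fin r → ℤ) = 0 := castHom.map_zero

lemma castFn_nsmul (n : ℕ) (a : Fin r → ℤ) : castFn (n • a) = (n : ℂ) • castFn a := by
  funext i; simp [castFn, Pi.smul_apply]

lemma castFn_sub (a b : Fin r → ℤ) : castFn (a - b) = castFn a - castFn b :=
  castHom.map_sub a b

lemma expMap_add (z w : Fin r → ℂ) : expMap (z + w) = expMap z * expMap w := by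
  funext i
  ext
  simp [expMap, mul_add, Complex.exp_add]

lemma expMap_zero : expMap (0 : Fin r → ℂ) = 1 := by
  funext i; ext; simp [expMap]

lemma expMap_neg (z : Fin r → ℂ) : expMap (-z) = (expMap z)⁻¹ := by
  refine eq_inv_of_mul_eq_one_left ?_
  rw [← expMap_add, neg_add_cancel, expMap_zero]

lemma expMap_sub (z w : Fin r → ℂ) : expMap (z - w) = expMap z * (expMap w)⁻¹ := by
  rw [sub_eq_add_neg, expMap_add, expMap_neg]

lemma expMap_eq_one_iff (z : Fin r → ℂ) :
    expMap z = 1 ↔ ∃ v : Fin r → ℤ, z = castFn v := by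
  constructor
  · intro h
    have h' : ∀ i, ∃ n : ℤ, z i = n := by
      intro i
      have hi : Complex.exp (2 * Real.pi * Complex.I * z i) = 1 := by
        have := congrFun h i
        simpa [expMap, Units.ext_iff] using this
      rw [Complex.exp_eq_one_iff] at hi
      obtain ⟨n, hn⟩ := hi
      refine ⟨n, ?_⟩
      have h2 : (2 * (Real.pi : ℂ) * Complex.I) ≠ 0 := by
        simp [Real.pi_ne_zero, Complex.I_ne_zero]
      have : (2 * (Real.pi : ℂ) * Complex.I) * z i = (2 * (Real.pi : ℂ) * Complex.I) * n := by
        rw [hn]; ring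
      exact mul_left_cancel₀ h2 this
    choose v hv using h'
    exact ⟨v, funext hv⟩
  · rintro ⟨v, rfl⟩
    funext i
    ext
    simp only [expMap, Units.val_mk0, Units.val_one, castFn]
    rw [show (2 : ℂ) * Real.pi * Complex.I * (v i : ℂ) = (v i : ℤ) * (2 * Real.pi * Complex.I) by
      ring]
    exact Complex.exp_int_mul_two_pi_mul_I (v i)

end ExpAux


open Module Submodule in
lemma ExpAux.finrank_span_cast_le {r : ℕ} (χ : AddSubgroup (Fin r → ℤ)) :
    finrank ℂ (Submodule.span ℂ (castFn '' (χ : Set (Fin r → ℤ)))) ≤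
      finrank ℤ (AddSubgroup.toIntSubmodule χ) := by
  classical
  set N := AddSubgroup.toIntSubmodule χ with hN
  let b := Module.Free.chooseBasis ℤ ↥N
  let g : Module.Free.ChooseBasisIndex ℤ ↥N → (Fin r → ℤ) := fun i => (b i : Fin r → ℤ)
  let f : Module.Free.ChooseBasisIndex ℤ ↥N → (Fin r → ℂ) := fun i => castFn (g i)
  have hNspan : Submodule.span ℤ (Set.range g) = N := by
    have hb := b.span_eq
    have : Set.range g = N.subtype '' (Set.range b) := by
      rw [← Set.range_comp]; rfl
    rw [this, ← Submodule.map_span, hb, Submodule.map_subtype_top]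
  have himage : castFn '' (χ : Set (Fin r → ℤ)) ⊆ ↑(Submodule.span ℂ (Set.range f)) := by
    rintro - ⟨x, hx, rfl⟩
    have hxN : x ∈ Submodule.span ℤ (Set.range g) := by
      rw [hNspan]; exact hx
    have h1 : castHom.toIntLinearMap x ∈ Submodule.span ℤ (castHom.toIntLinearMap '' Set.range g) :=
      Submodule.apply_mem_span_image_of_mem_span _ hxN
    have h2 : (castHom.toIntLinearMap '' Set.range g : Set (Fin r → ℂ)) = Set.range f := by
      rw [← Set.range_comp]; rfl
    rw [h2] at h1
    exact Submodule.span_le_restrictScalars ℤ ℂ (Set.range f) h1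
  have hle : Submodule.span ℂ (castFn '' (χ : Set (Fin r → ℤ))) ≤ Submodule.span ℂ (Set.range f) :=
    Submodule.span_le.mpr himage
  have h3 : finrank ℂ (Submodule.span ℂ (Set.range f)) ≤
      Fintype.card (Module.Free.ChooseBasisIndex ℤ ↥N) := by
    have := finrank_span_le_card (R := ℂ) (Set.range f)
    refine this.trans ?_
    rw [Set.toFinset_range]
    exact (Finset.card_image_le).trans (by simp)
  have h4 : Fintype.card (Module.Free.ChooseBasisIndex ℤ ↥N) = finrank ℤ ↥N :=
    (Module.finrank_eq_card_chooseBasisIndex ℤ ↥N).symm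
  exact (Submodule.finrank_mono hle).trans (by rw [h4] at h3; exact h3)

open ExpAux Module Submodule in
theorem exp_inter_aux {r : ℕ} (χ₁ χ₂ : AddSubgroup (Fin r → ℤ))
    (h₁ : IsPrimitiveLattice χ₁) (h₂ : IsPrimitiveLattice χ₂)
    (hdisj : χ₁ ⊓ χ₂ = ⊥)
    (hrank : Module.finrank ℤ ↥(AddSubgroup.toIntSubmodule (χ₁ ⊔ χ₂)) = r) :
    ∃ S : Subgroup (Fin r → ℂˣ),
      (S : Set (Fin r → ℂˣ)) = expMap '' complexSpan χ₁ ∩ expMap '' complexSpan χ₂ ∧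
      Finite ↥S ∧
      Nonempty (↥S ≃* Multiplicative
        (↥(addPrimitiveClosure (χ₁ ⊔ χ₂)) ⧸
          (χ₁ ⊔ χ₂).addSubgroupOf (addPrimitiveClosure (χ₁ ⊔ χ₂)))) := by
  classical
  set N₁ := AddSubgroup.toIntSubmodule χ₁ with hN₁
  set N₂ := AddSubgroup.toIntSubmodule χ₂ with hN₂
  have hNsup : N₁ ⊔ N₂ = AddSubgroup.toIntSubmodule (χ₁ ⊔ χ₂) :=
    (SupHomClass.map_sup AddSubgroup.toIntSubmodule χ₁ χ₂).symm
  have hNinf : N₁ ⊓ N₂ = ⊥ := by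
    rw [← AddSubgroup.toIntSubmodule.map_inf, hdisj]
    exact AddSubgroup.toIntSubmodule.map_bot
  -- finrank of the full lattice
  have hMfin : finrank ℤ (Fin r → ℤ) = r := by
    simp [Module.finrank_fintype_fun_eq_card]
  -- (i) : finrank sum
  have hsum : finrank ℤ N₁ + finrank ℤ N₂ = r := by
    have h := Submodule.rank_sup_add_rank_inf_eq N₁ N₂
    rw [hNinf, rank_bot] at h
    have e1 : (finrank ℤ ↥(N₁ ⊔ N₂) : Cardinal) = Module.rank ℤ ↥(N₁ ⊔ N₂) :=
      Submodule.finrank_eq_rank _ _ _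
    have e2 : (finrank ℤ ↥N₁ : Cardinal) = Module.rank ℤ ↥N₁ := Submodule.finrank_eq_rank _ _ _
    have e3 : (finrank ℤ ↥N₂ : Cardinal) = Module.rank ℤ ↥N₂ := Submodule.finrank_eq_rank _ _ _
    have : ((finrank ℤ ↥(N₁ ⊔ N₂) : ℕ) : Cardinal) = ((finrank ℤ ↥N₁ + finrank ℤ ↥N₂ : ℕ) : Cardinal) := by
      rw [Nat.cast_add, e1, e2, e3, ← h, add_zero]
    have h2 := Nat.cast_injective (R := Cardinal) this
    rw [hNsup, hrank] at h2
    omega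
  -- (ii) : torsion
  have hTor : ∀ v : Fin r → ℤ, ∃ n : ℕ, 0 < n ∧ n • v ∈ χ₁ ⊔ χ₂ := by
    have hQ0 : finrank ℤ ((Fin r → ℤ) ⧸ (N₁ ⊔ N₂)) = 0 := by
      have hle := Module.finrank_quotient_add_finrank_le (R := ℤ) (M := Fin r → ℤ) (N₁ ⊔ N₂)
      have hr' : finrank ℤ ↥(N₁ ⊔ N₂) = r := by rw [hNsup]; exact hrank
      rw [hMfin, hr'] at hle
      omega
    have htorQ := Module.finrank_eq_zero_iff.mp hQ0
    intro v
    obtain ⟨a, ha, hav⟩ := htorQ (Submodule.Quotient.mk v)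
    have hmem : a • v ∈ N₁ ⊔ N₂ := by
      rwa [← Submodule.Quotient.mk_smul, Submodule.Quotient.mk_eq_zero] at hav
    refine ⟨a.natAbs, Int.natAbs_pos.mpr ha, ?_⟩
    have hmem' : (a.natAbs : ℤ) • v ∈ N₁ ⊔ N₂ := by
      rcases Int.natAbs_eq a with h | h
      · rwa [← h]
      · rw [h, neg_smul] at hmem
        have := (N₁ ⊔ N₂).neg_mem hmem
        rwa [neg_neg] at this
    have : (a.natAbs : ℤ) • v = a.natAbs • v := natCast_zsmul v a.natAbs
    rw [this] at hmem'
    rw [hNsup] at hmem'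
    exact hmem'
  -- primitive closure is everything
  have hcl : addPrimitiveClosure (χ₁ ⊔ χ₂) = ⊤ := by
    ext x
    simp only [AddSubgroup.mem_top, iff_true]
    exact hTor x
  -- complex spans
  set V₁ : Submodule ℂ (Fin r → ℂ) := Submodule.span ℂ (castFn '' (χ₁ : Set (Fin r → ℤ))) with hV₁
  set V₂ : Submodule ℂ (Fin r → ℂ) := Submodule.span ℂ (castFn '' (χ₂ : Set (Fin r → ℤ))) with hV₂
  have hcs₁ : complexSpan χ₁ = ↑V₁ := rfl
  have hcs₂ : complexSpan χ₂ = ↑V₂ := rfl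
  have hsupV : V₁ ⊔ V₂ = ⊤ := by
    rw [eq_top_iff, ← (Pi.basisFun ℂ (Fin r)).span_eq, Submodule.span_le]
    rintro - ⟨j, rfl⟩
    obtain ⟨n, hn, hmem⟩ := hTor (Pi.single j 1)
    have hcast : castFn (Pi.single j 1) = Pi.basisFun ℂ (Fin r) j := by
      funext i
      by_cases h : i = j <;> simp [castFn, Pi.single_apply, Pi.basisFun_apply, h]
    have hmem2 : castFn (n • Pi.single j 1) ∈ V₁ ⊔ V₂ := by
      obtain ⟨y, hy, z, hz, hyz⟩ := AddSubgroup.mem_sup.mp hmem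
      rw [← hyz, castFn_add]
      exact Submodule.add_mem_sup (Submodule.subset_span ⟨y, hy, rfl⟩)
        (Submodule.subset_span ⟨z, hz, rfl⟩)
    rw [castFn_nsmul] at hmem2
    have hne : (n : ℂ) ≠ 0 := Nat.cast_ne_zero.mpr hn.ne'
    have h5 := Submodule.smul_mem _ ((n : ℂ)⁻¹) hmem2
    rw [smul_smul, inv_mul_cancel₀ hne, one_smul] at h5
    rw [← hcast]
    exact h5
  have hinfV : V₁ ⊓ V₂ = ⊥ := by
    have hf1 := ExpAux.finrank_span_cast_le χ₁
    have hf2 := ExpAux.finrank_span_cast_le χ₂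
    rw [← hN₁] at hf1
    rw [← hN₂] at hf2
    rw [← hV₁] at hf1
    rw [← hV₂] at hf2
    have hkey := Submodule.finrank_sup_add_finrank_inf_eq V₁ V₂
    have htop : finrank ℂ ↥(V₁ ⊔ V₂) = r := by
      rw [hsupV, finrank_top, Module.finrank_fintype_fun_eq_card, Fintype.card_fin]
    have h0 : finrank ℂ ↥(V₁ ⊓ V₂) = 0 := by omega
    exact Submodule.finrank_eq_zero.mp h0
  have hcompl : IsCompl V₁ V₂ := ⟨disjoint_iff.mpr hinfV, codisjoint_iff.mpr hsupV⟩
  -- Fact B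
  have hB₁ : ∀ w : Fin r → ℤ, castFn w ∈ V₁ → w ∈ χ₁ := by
    intro w hw
    obtain ⟨n, hn, hmem⟩ := hTor w
    obtain ⟨y, hy, z, hz, hyz⟩ := AddSubgroup.mem_sup.mp hmem
    have hz0 : castFn z ∈ V₁ ⊓ V₂ := by
      constructor
      · have : castFn z = (n : ℂ) • castFn w - castFn y := by
          rw [← castFn_nsmul, ← hyz, castFn_add]; ring
        rw [this]
        exact Submodule.sub_mem _ (Submodule.smul_mem _ _ hw)
          (Submodule.subset_span ⟨y, hy, rfl⟩)
      · exact Submodule.subset_span ⟨z, hz, rfl⟩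
    rw [hinfV] at hz0
    have hz00 : z = 0 := castFn_injective (by rw [castFn_zero]; simpa using hz0)
    rw [hz00, add_zero] at hyz
    exact h₁ w n hn (hyz ▸ hy)
  have hB₂ : ∀ w : Fin r → ℤ, castFn w ∈ V₂ → w ∈ χ₂ := by
    intro w hw
    obtain ⟨n, hn, hmem⟩ := hTor w
    obtain ⟨y, hy, z, hz, hyz⟩ := AddSubgroup.mem_sup.mp hmem
    have hy0 : castFn y ∈ V₁ ⊓ V₂ := by
      constructor
      · exact Submodule.subset_span ⟨y, hy, rfl⟩
      · have : castFn y = (n : ℂ) • castFn w - castFn z := by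
          rw [← castFn_nsmul, ← hyz, castFn_add]; ring
        rw [this]
        exact Submodule.sub_mem _ (Submodule.smul_mem _ _ hw)
          (Submodule.subset_span ⟨z, hz, rfl⟩)
    rw [hinfV] at hy0
    have hy00 : y = 0 := castFn_injective (by rw [castFn_zero]; simpa using hy0)
    rw [hy00, zero_add] at hyz
    exact h₂ w n hn (hyz ▸ hz)
  have expMap_cast_one : ∀ w : Fin r → ℤ, expMap (castFn w) = 1 :=
    fun w => (expMap_eq_one_iff _).mpr ⟨w, rfl⟩
  -- the projection onto V₁ along V₂
  set P : (Fin r → ℂ) →ₗ[ℂ] (Fin r → ℂ) :=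
    V₁.subtype ∘ₗ (V₁.projectionOnto V₂ hcompl) with hP
  have hPmem : ∀ x, P x ∈ V₁ := fun x => (V₁.projectionOnto V₂ hcompl x).2
  have hPleft : ∀ x ∈ V₁, P x = x := by
    intro x hx
    have h := Submodule.projectionOnto_apply_left hcompl ⟨x, hx⟩
    simpa [hP] using congrArg (V₁.subtype) h
  have hPright : ∀ x ∈ V₂, P x = 0 := by
    intro x hx
    have h := Submodule.projectionOnto_apply_of_mem_right hcompl hx
    simp [hP, h]
  have hPsub : ∀ x, x - P x ∈ V₂ := by
    intro x
    have h : (V₁.projectionOnto V₂ hcompl x : Fin r → ℂ) +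
        (V₂.projectionOnto V₁ hcompl.symm x : Fin r → ℂ) = x :=
      Submodule.projection_add_projection_eq_self hcompl x
    have h' : x - P x = (V₂.projectionOnto V₁ hcompl.symm x : Fin r → ℂ) := by
      simp only [hP, LinearMap.comp_apply, Submodule.subtype_apply]; exact sub_eq_of_eq_add' h.symm
    rw [h']
    exact (V₂.projectionOnto V₁ hcompl.symm x).2
  -- the homomorphism G
  let G : Multiplicative (Fin r → ℤ) →* (Fin r → ℂˣ) :=
  { toFun := fun v => expMap (P (castFn v.toAdd)),
    map_one' := by
      show expMap (P (castFn ((1 : Multiplicative (Fin r → ℤ)).toAdd))) = 1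
      rw [toAdd_one, castFn_zero, map_zero, expMap_zero],
    map_mul' := fun a b => by
      show expMap (P (castFn ((a * b).toAdd))) =
        expMap (P (castFn a.toAdd)) * expMap (P (castFn b.toAdd))
      rw [toAdd_mul, castFn_add, map_add, expMap_add] }
  have hGapp : ∀ v, G v = expMap (P (castFn v.toAdd)) := fun v => rfl
  -- the set identity
  have hSset : (G.range : Set (Fin r → ℂˣ)) =
      expMap '' complexSpan χ₁ ∩ expMap '' complexSpan χ₂ := by
    ext x
    simp only [SetLike.mem_coe, MonoidHom.mem_range, Set.mem_inter_iff, Set.mem_image]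
    constructor
    · rintro ⟨v, rfl⟩
      rw [hGapp]
      constructor
      · exact ⟨P (castFn v.toAdd), by rw [hcs₁]; exact hPmem _, rfl⟩
      · refine ⟨P (castFn v.toAdd) - castFn v.toAdd, ?_, ?_⟩
        · rw [hcs₂]
          have h := V₂.neg_mem (hPsub (castFn v.toAdd))
          simpa [neg_sub] using h
        · rw [expMap_sub, expMap_cast_one, inv_one, mul_one]
    · rintro ⟨⟨z₁, hz₁, rfl⟩, ⟨z₂, hz₂, heq⟩⟩
      rw [hcs₁] at hz₁
      rw [hcs₂] at hz₂
      have h1 : expMap (z₁ - z₂) = 1 := by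
        rw [expMap_sub, ← heq, mul_inv_cancel]
      obtain ⟨w, hw⟩ := (expMap_eq_one_iff _).mp h1
      refine ⟨Multiplicative.ofAdd w, ?_⟩
      rw [hGapp]
      have : P (castFn (Multiplicative.ofAdd w).toAdd) = z₁ := by
        show P (castFn w) = z₁
        rw [← hw, map_sub, hPleft z₁ hz₁, hPright z₂ hz₂, sub_zero]
      rw [this]
  -- the comparison homomorphism φ
  let j : (Fin r → ℤ) →+ ↥(addPrimitiveClosure (χ₁ ⊔ χ₂)) :=
  { toFun := fun v => ⟨v, by rw [hcl]; trivial⟩,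
    map_zero' := rfl,
    map_add' := fun a b => rfl }
  let φ : (Fin r → ℤ) →+ (↥(addPrimitiveClosure (χ₁ ⊔ χ₂)) ⧸
      (χ₁ ⊔ χ₂).addSubgroupOf (addPrimitiveClosure (χ₁ ⊔ χ₂))) :=
    (QuotientAddGroup.mk' _).comp j
  have hφapp : ∀ v, φ v = QuotientAddGroup.mk' _ (j v) := fun v => rfl
  have hφsurj : Function.Surjective φ := by
    intro q
    induction q using QuotientAddGroup.induction_on with
    | H x =>
      refine ⟨x.1, ?_⟩
      rw [hφapp]
      congr 1
  have hφker : ∀ v, φ v = 0 ↔ v ∈ χ₁ ⊔ χ₂ := by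
    intro v
    rw [hφapp, QuotientAddGroup.mk'_apply, QuotientAddGroup.eq_zero_iff]
    exact AddSubgroup.mem_addSubgroupOf
  let φ' := AddMonoidHom.toMultiplicative φ
  have hφ'app : ∀ v, φ' v = Multiplicative.ofAdd (φ v.toAdd) := fun v => rfl
  have hφ'surj : Function.Surjective φ' := by
    intro q
    obtain ⟨v, hv⟩ := hφsurj q.toAdd
    exact ⟨Multiplicative.ofAdd v, by rw [hφ'app]; simp [hv]⟩
  have hker : G.ker = φ'.ker := by
    ext v
    simp only [MonoidHom.mem_ker]
    have hGv : G v = 1 ↔ v.toAdd ∈ χ₁ ⊔ χ₂ := by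
      rw [hGapp]
      constructor
      · intro h
        obtain ⟨w, hw⟩ := (expMap_eq_one_iff _).mp h
        have hw1 : w ∈ χ₁ := hB₁ w (hw ▸ hPmem _)
        have hw2 : v.toAdd - w ∈ χ₂ := by
          apply hB₂
          rw [castFn_sub, ← hw]
          exact hPsub (castFn v.toAdd)
        have hvd : v.toAdd = w + (v.toAdd - w) := by ring
        rw [hvd]
        exact AddSubgroup.mem_sup.mpr ⟨w, hw1, v.toAdd - w, hw2, rfl⟩
      · intro h
        obtain ⟨y, hy, z, hz, hyz⟩ := AddSubgroup.mem_sup.mp h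
        rw [← hyz, castFn_add, map_add, hPleft _ (Submodule.subset_span ⟨y, hy, rfl⟩),
          hPright _ (Submodule.subset_span ⟨z, hz, rfl⟩), add_zero]
        exact expMap_cast_one y
    have hφ'v : φ' v = 1 ↔ v.toAdd ∈ χ₁ ⊔ χ₂ := by
      rw [hφ'app, ← hφker v.toAdd]
      exact ⟨fun h => by simpa using congrArg Multiplicative.toAdd h,
        fun h => by rw [h]; rfl⟩
    rw [hGv, hφ'v]
  -- finiteness
  haveI hFGZ : AddGroup.FG (Fin r → ℤ) := Module.Finite.iff_addGroup_fg.mp inferInstance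
  have hfinQ : Finite ((Fin r → ℤ) ⧸ (χ₁ ⊔ χ₂)) := by
    apply AddCommGroup.finite_of_fg_torsion
    intro x
    induction x using QuotientAddGroup.induction_on with
    | H v =>
      obtain ⟨n, hn, hmem⟩ := hTor v
      rw [isOfFinAddOrder_iff_nsmul_eq_zero]
      refine ⟨n, hn, ?_⟩
      have : (n • (QuotientAddGroup.mk v : (Fin r → ℤ) ⧸ (χ₁ ⊔ χ₂))) =
          QuotientAddGroup.mk (n • v) := rfl
      rw [this, QuotientAddGroup.eq_zero_iff]
      exact hmem
  have hfinT : Finite (↥(addPrimitiveClosure (χ₁ ⊔ χ₂)) ⧸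
      (χ₁ ⊔ χ₂).addSubgroupOf (addPrimitiveClosure (χ₁ ⊔ χ₂))) := by
    have hk : φ.ker = χ₁ ⊔ χ₂ := by
      ext v
      rw [AddMonoidHom.mem_ker]
      exact hφker v
    haveI : Finite ((Fin r → ℤ) ⧸ φ.ker) := by rw [hk]; exact hfinQ
    exact Finite.of_equiv _ (QuotientAddGroup.quotientKerEquivOfSurjective φ hφsurj).toEquiv
  -- the final isomorphism
  have E : ↥(G.range) ≃* Multiplicative (↥(addPrimitiveClosure (χ₁ ⊔ χ₂)) ⧸
      (χ₁ ⊔ χ₂).addSubgroupOf (addPrimitiveClosure (χ₁ ⊔ χ₂))) :=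
    ((QuotientGroup.quotientKerEquivRange G).symm.trans
      (QuotientGroup.quotientMulEquivOfEq hker)).trans
      (QuotientGroup.quotientKerEquivOfSurjective φ' hφ'surj)
  refine ⟨G.range, hSset, ?_, ⟨E⟩⟩
  haveI : Finite (Multiplicative (↥(addPrimitiveClosure (χ₁ ⊔ χ₂)) ⧸
      (χ₁ ⊔ χ₂).addSubgroupOf (addPrimitiveClosure (χ₁ ⊔ χ₂)))) :=
    Finite.of_equiv _ Multiplicative.ofAdd
  exact Finite.of_equiv _ E.symm.toEquiv


/-- For primitive sublattices `χ₁, χ₂ ≤ ℤ^r` with `χ₁ ∩ χ₂ = 0` and `χ₁ ⊕ χ₂`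
of full rank, `exp(χ₁ ⊗ ℂ) ∩ exp(χ₂ ⊗ ℂ)` is a finite group isomorphic to the
determinant group `(χ₁+χ₂)‾/(χ₁+χ₂)`. -/
theorem exp_inter_iso_determinant_group {r : ℕ} (χ₁ χ₂ : AddSubgroup (Fin r → ℤ))
    (h₁ : IsPrimitiveLattice χ₁) (h₂ : IsPrimitiveLattice χ₂)
    (hdisj : χ₁ ⊓ χ₂ = ⊥)
    (hrank : Module.finrank ℤ ↥(AddSubgroup.toIntSubmodule (χ₁ ⊔ χ₂)) = r) :
    ∃ S : Subgroup (Fin r → ℂˣ),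
      (S : Set (Fin r → ℂˣ)) = expMap '' complexSpan χ₁ ∩ expMap '' complexSpan χ₂ ∧
      Finite ↥S ∧
      Nonempty (↥S ≃* Multiplicative
        (↥(addPrimitiveClosure (χ₁ ⊔ χ₂)) ⧸
          (χ₁ ⊔ χ₂).addSubgroupOf (addPrimitiveClosure (χ₁ ⊔ χ₂)))) :=
  exp_inter_aux χ₁ χ₂ h₁ h₂ hdisj hrank
end

section
/- For every n ≥ 0 and every finite abelian group A, there exist an integer r and subtori T₁, T₂ of (ℂ*)^r such that T₁ ∩ T₂ is isomorphic, as a complex algebraic group, to (ℂ*)^n × A. -/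
namespace Aux

variable {m : ℕ}

def latt (D : Fin m → ℕ) : AddSubgroup (Fin (m + m) → ℤ) where
  carrier := {v | ∀ j, v (Fin.natAdd m j) = (D j : ℤ) * v (Fin.castAdd m j)}
  add_mem' := by intro x y hx hy j; simp only [Pi.add_apply, hx j, hy j]; ring
  zero_mem' := by intro j; simp
  neg_mem' := by intro x hx j; simp only [Pi.neg_apply, hx j]; ring

lemma mem_latt (D : Fin m → ℕ) (v : Fin (m + m) → ℤ) :
    v ∈ latt D ↔ ∀ j, v (Fin.natAdd m j) = (D j : ℤ) * v (Fin.castAdd m j) := Iff.rfl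

lemma latt_primitive (D : Fin m → ℕ) : IsPrimitiveLattice (latt D) := by
  intro x c hc hm j
  have h := (mem_latt D _).1 hm j
  have hc' : (c : ℤ) ≠ 0 := by exact_mod_cast hc.ne'
  simp only [Pi.smul_apply, nsmul_eq_mul] at h
  apply mul_left_cancel₀ hc'
  linear_combination h

def gen (D : Fin m → ℕ) (j : Fin m) : Fin (m + m) → ℤ :=
  fun i => Fin.addCases (fun j' => if j' = j then 1 else 0)
    (fun j' => if j' = j then (D j : ℤ) else 0) i

lemma gen_mem (D : Fin m → ℕ) (j : Fin m) : gen D j ∈ latt D := by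
  intro j'
  simp only [gen, Fin.addCases_left, Fin.addCases_right]
  split
  · next h => subst h; simp
  · simp

lemma complexSpan_latt (D : Fin m → ℕ) :
    complexSpan (latt D) =
      {z | ∀ j, z (Fin.natAdd m j) = (D j : ℂ) * z (Fin.castAdd m j)} := by
  apply Set.Subset.antisymm
  · have : ((fun (v : Fin (m+m) → ℤ) (i : Fin (m+m)) => (v i : ℂ)) '' ((latt D : Set _))) ⊆
        ↑({ carrier := {z | ∀ j, z (Fin.natAdd m j) = (D j : ℂ) * z (Fin.castAdd m j)},
            add_mem' := by intro x y hx hy j; simp only [Set.mem_setOf_eq, Pi.add_apply, hx j, hy j]; ring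
            zero_mem' := by intro j; simp
            smul_mem' := by intro c x hx j; simp only [Set.mem_setOf_eq, Pi.smul_apply, smul_eq_mul, hx j]; ring } :
            Submodule ℂ (Fin (m+m) → ℂ)) := by
      rintro _ ⟨v, hv, rfl⟩ j
      have := (mem_latt D v).1 hv j
      simp only [Set.mem_setOf_eq]
      exact_mod_cast congrArg (fun t : ℤ => (t : ℂ)) this
  -- span_le
    exact (Submodule.span_le.2 this : _)
  · intro z hz
    have hrepr : z = ∑ j : Fin m, z (Fin.castAdd m j) •
        (fun i => ((gen D j i : ℤ) : ℂ)) := by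
      funext i
      induction i using Fin.addCases with
      | left j₀ =>
        simp only [Finset.sum_apply, Pi.smul_apply, smul_eq_mul, gen, Fin.addCases_left]
        push_cast
        simp [mul_ite]
      | right j₀ =>
        rw [hz j₀]
        simp only [Finset.sum_apply, Pi.smul_apply, smul_eq_mul, gen, Fin.addCases_right]
        push_cast
        simp only [mul_ite, mul_zero, Finset.sum_ite_eq, Finset.mem_univ, if_true]
        ring
    rw [hrepr]
    exact Submodule.sum_mem _ fun j _ =>
      Submodule.smul_mem _ _ (Submodule.subset_span ⟨gen D j, gen_mem D j, rfl⟩)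


lemma two_pi_I_ne : (2 * (Real.pi : ℂ) * Complex.I) ≠ 0 :=
  mul_ne_zero (mul_ne_zero two_ne_zero (Complex.ofReal_ne_zero.2 Real.pi_ne_zero)) Complex.I_ne_zero

lemma exists_exp (u : ℂˣ) : ∃ t : ℂ, Complex.exp (2 * Real.pi * Complex.I * t) = (u : ℂ) := by
  have h : (u : ℂ) ∈ Set.range Complex.exp := by
    rw [Complex.range_exp]; exact u.ne_zero
  obtain ⟨t, ht⟩ := h
  refine ⟨t / (2 * Real.pi * Complex.I), ?_⟩
  rw [mul_comm, div_mul_cancel₀ _ two_pi_I_ne]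
  exact ht

lemma expMap_image (D : Fin m → ℕ) :
    expMap '' complexSpan (latt D) =
      {w | ∀ j, w (Fin.natAdd m j) = w (Fin.castAdd m j) ^ D j} := by
  rw [complexSpan_latt]
  ext w
  constructor
  · rintro ⟨z, hz, rfl⟩ j
    apply Units.ext
    simp only [expMap, Units.val_mk0, Units.val_pow_eq_pow_val, hz j]
    rw [show (2 * (Real.pi:ℂ) * Complex.I * ((D j : ℂ) * z (Fin.castAdd m j))) =
      (D j : ℂ) * (2 * Real.pi * Complex.I * z (Fin.castAdd m j)) by ring,
      Complex.exp_nat_mul]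
  · intro hw
    choose s hs using fun j => exists_exp (w (Fin.castAdd m j))
    refine ⟨fun i => Fin.addCases s (fun j => (D j : ℂ) * s j) i, ?_, ?_⟩
    · intro j
      simp only [Fin.addCases_right, Fin.addCases_left]
    · funext i
      induction i using Fin.addCases with
      | left j =>
        apply Units.ext
        simp only [expMap, Units.val_mk0, Fin.addCases_left]
        exact hs j
      | right j =>
        apply Units.ext
        simp only [expMap, Units.val_mk0, Fin.addCases_right]
        rw [hw j]
        simp only [Units.val_pow_eq_pow_val, ← hs j]
        rw [show (2 * (Real.pi:ℂ) * Complex.I * ((D j : ℂ) * s j)) =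
          (D j : ℂ) * (2 * Real.pi * Complex.I * s j) by ring, Complex.exp_nat_mul]

def interSubgroup (D : Fin m → ℕ) : Subgroup (Fin (m + m) → ℂˣ) where
  carrier := {w | ∀ j, w (Fin.castAdd m j) ^ D j = 1 ∧ w (Fin.natAdd m j) = 1}
  one_mem' := by intro j; simp
  mul_mem' := by
    intro x y hx hy j
    simp only [Pi.mul_apply, mul_pow, (hx j).1, (hy j).1, (hx j).2, (hy j).2, mul_one]
    exact ⟨trivial, trivial⟩
  inv_mem' := by
    intro x hx j
    simp only [Pi.inv_apply, inv_pow, (hx j).1, (hx j).2, inv_one]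
    exact ⟨trivial, trivial⟩

lemma mem_interSubgroup (D : Fin m → ℕ) (w : Fin (m + m) → ℂˣ) :
    w ∈ interSubgroup D ↔
      ∀ j, w (Fin.castAdd m j) ^ D j = 1 ∧ w (Fin.natAdd m j) = 1 := Iff.rfl

lemma interSubgroup_eq (D : Fin m → ℕ) :
    (interSubgroup D : Set (Fin (m + m) → ℂˣ)) =
      expMap '' complexSpan (latt fun _ => 0) ∩ expMap '' complexSpan (latt D) := by
  rw [expMap_image, expMap_image]
  ext w
  constructor
  · intro h
    exact ⟨fun j => ((h j).2).trans (pow_zero _).symm,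
      fun j => ((h j).2).trans ((h j).1).symm⟩
  · rintro ⟨h1, h2⟩ j
    have hb : w (Fin.natAdd m j) = 1 := (h1 j).trans (pow_zero _)
    exact ⟨(h2 j).symm.trans hb, hb⟩


def splitD (n : ℕ) {k : ℕ} (N' : Fin k → ℕ) : Fin (n + k) → ℕ :=
  Fin.addCases (fun _ => 0) N'

def splitEquiv (n : ℕ) {k : ℕ} (N' : Fin k → ℕ) :
    interSubgroup (splitD n N') ≃* (Fin n → ℂˣ) × ∀ j, rootsOfUnity (N' j) ℂ where
  toFun s := (fun j₁ => s.1 (Fin.castAdd (n + k) (Fin.castAdd k j₁)),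
    fun j₂ => ⟨s.1 (Fin.castAdd (n + k) (Fin.natAdd n j₂)), by
      rw [mem_rootsOfUnity]
      have h := (s.2 (Fin.natAdd n j₂)).1
      rwa [splitD, Fin.addCases_right] at h⟩)
  invFun p := ⟨fun i => Fin.addCases
      (fun j => Fin.addCases (fun j₁ => p.1 j₁) (fun j₂ => ((p.2 j₂ : ℂˣ))) j)
      (fun _ => 1) i, by
    intro j
    refine ⟨?_, by simp only [Fin.addCases_right]⟩
    simp only [Fin.addCases_left]
    induction j using Fin.addCases with
    | left j₁ => simp only [splitD, Fin.addCases_left, pow_zero]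
    | right j₂ =>
      simp only [splitD, Fin.addCases_right]
      have h := (p.2 j₂).2
      rwa [mem_rootsOfUnity] at h⟩
  left_inv s := by
    apply Subtype.ext
    funext i
    induction i using Fin.addCases with
    | left j =>
      simp only [Fin.addCases_left]
      induction j using Fin.addCases with
      | left j₁ => simp only [Fin.addCases_left]
      | right j₂ => simp only [Fin.addCases_right]
    | right j =>
      simp only [Fin.addCases_right]
      exact ((s.2 j).2).symm
  right_inv p := by
    refine Prod.ext ?_ ?_
    · funext j₁
      simp only [Fin.addCases_left]
    · funext j₂
      apply Subtype.ext
      simp only [Fin.addCases_left, Fin.addCases_right]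
  map_mul' s t := rfl


noncomputable def rootsEquiv (M : ℕ) [NeZero M] : Multiplicative (ZMod M) ≃* rootsOfUnity M ℂ :=
  have h : IsPrimitiveRoot (Complex.exp (2 * Real.pi * Complex.I / M)) M :=
    Complex.isPrimitiveRoot_exp M (NeZero.ne M)
  have h' := h.isUnit_unit (NeZero.ne M)
  (AddEquiv.toMultiplicativeLeft h'.zmodEquivZPowers).trans (MulEquiv.subgroupCongr h'.zpowers_eq)

end Aux

/-- For every `n ≥ 0` and every finite abelian group `A` there are subtori
`T₁, T₂` of some `(ℂ*)^r` whose intersection is isomorphic (as a topological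
group, i.e. as a complex algebraic group of this kind) to `(ℂ*)^n × A`. -/
theorem exists_subtori_inter_iso (n : ℕ) (A : Type) [AddCommGroup A] [Finite A] :
    ∃ (r : ℕ) (χ₁ χ₂ : AddSubgroup (Fin r → ℤ)),
      IsPrimitiveLattice χ₁ ∧ IsPrimitiveLattice χ₂ ∧
      ∃ S : Subgroup (Fin r → ℂˣ),
        (S : Set (Fin r → ℂˣ)) = expMap '' complexSpan χ₁ ∩ expMap '' complexSpan χ₂ ∧
        ∃ e : ↥S ≃* ((Fin n → ℂˣ) × Multiplicative A),
          letI : TopologicalSpace (Multiplicative A) := ⊥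
          Continuous e ∧ Continuous e.symm := by
  obtain ⟨ι, hι, N, hN, ⟨f⟩⟩ := AddCommGroup.equiv_directSum_zmod_of_finite' A
  haveI := hι
  haveI : ∀ i : ι, NeZero (N i) := fun i => ⟨by have := hN i; omega⟩
  set k := Fintype.card ι with hk
  let φ : Fin k ≃ ι := (Fintype.equivFin ι).symm
  let N' : Fin k → ℕ := fun j => N (φ j)
  haveI hNZ : ∀ j, NeZero (N' j) := fun j => ‹∀ i : ι, NeZero (N i)› (φ j)
  let D := Aux.splitD n N'
  refine ⟨(n + k) + (n + k), Aux.latt (fun _ => 0), Aux.latt D,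
    Aux.latt_primitive _, Aux.latt_primitive _, Aux.interSubgroup D,
    Aux.interSubgroup_eq D, ?_⟩
  letI : TopologicalSpace (Multiplicative A) := ⊥
  haveI : DiscreteTopology (Multiplicative A) := ⟨rfl⟩
  let gA : A ≃+ ∀ j : Fin k, ZMod (N' j) :=
    (f.trans (DirectSum.addEquivProd _)).trans
      (RingEquiv.piCongrLeft' (fun i => ZMod (N i)) φ.symm).toAddEquiv
  let eK : (∀ j : Fin k, rootsOfUnity (N' j) ℂ) ≃* Multiplicative A :=
    (MulEquiv.piCongrRight fun j => (Aux.rootsEquiv (N' j)).symm).trans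
      (((MulEquiv.piMultiplicative fun j => ZMod (N' j)).symm).trans
        (AddEquiv.toMultiplicative gA.symm))
  let e := (Aux.splitEquiv n N').trans
    (MulEquiv.prodCongr (MulEquiv.refl (Fin n → ℂˣ)) eK)
  haveI hdisc : ∀ j, DiscreteTopology (rootsOfUnity (N' j) ℂ) := fun j => inferInstance
  refine ⟨e, ?_, ?_⟩
  · have he : ⇑e = fun s => (((Aux.splitEquiv n N') s).1, eK ((Aux.splitEquiv n N') s).2) := rfl
    rw [he]
    have h1 : Continuous fun s : Aux.interSubgroup D => ((Aux.splitEquiv n N') s).1 :=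
      continuous_pi fun j₁ =>
        show Continuous fun s : Aux.interSubgroup D =>
            (s : Fin ((n+k)+(n+k)) → ℂˣ) (Fin.castAdd (n + k) (Fin.castAdd k j₁)) from
          (continuous_apply _).comp continuous_subtype_val
    have h2 : Continuous fun s : Aux.interSubgroup D => ((Aux.splitEquiv n N') s).2 :=
      continuous_pi fun j₂ =>
        Continuous.subtype_mk
          (show Continuous fun s : Aux.interSubgroup D =>
              (s : Fin ((n+k)+(n+k)) → ℂˣ) (Fin.castAdd (n + k) (Fin.natAdd n j₂)) from
            (continuous_apply _).comp continuous_subtype_val) _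
    exact h1.prodMk (continuous_of_discreteTopology.comp h2)
  · have he : ⇑e.symm = fun p : (Fin n → ℂˣ) × Multiplicative A =>
        (Aux.splitEquiv n N').symm (p.1, eK.symm p.2) := rfl
    rw [he]
    have hsymm : Continuous fun p : (Fin n → ℂˣ) × Multiplicative A =>
        (eK.symm p.2 : ∀ j, rootsOfUnity (N' j) ℂ) :=
      continuous_of_discreteTopology.comp continuous_snd
    apply Continuous.subtype_mk
    apply continuous_pi
    intro i
    induction i using Fin.addCases with
    | left j =>
      simp only [Fin.addCases_left]
      induction j using Fin.addCases with
      | left j₁ =>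
        simp only [Fin.addCases_left]
        exact (continuous_apply j₁).comp continuous_fst
      | right j₂ =>
        simp only [Fin.addCases_right]
        exact continuous_subtype_val.comp ((continuous_apply j₂).comp hsymm)
    | right j =>
      simp only [Fin.addCases_right]
      exact continuous_const
end
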